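/- arXiv:2009.06350 — 3 statements merged into one kernel-verified Lean document; each statement's English description precedes it below -/
import Mathlib

section
/- Let A(ε) be the N×N matrix (N ≥ 2) with entries a_{ij} = z_i/N − ε/(N−1) for j ≤ N−1 and a_{iN} = z_i/N + ε, where the row sums z_i satisfy 0 ≤ z_i and ∑_i z_i < N, and ε is small enough that I − A(ε) is invertible. Then for 1 ≤ ℓ ≤ N, the ℓ-th component of (I − A(ε))⁻¹ 1 equals −(N−1)(N z_ℓ + N − z̃ − z_N) / [(N−1)(−N + z̃ + z_N) − N ε (−N z_N + z̃ + z_N)], where z̃ = ∑_{i=1}^{N−1} z_i. -/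
open Matrix Finset

theorem stmt_10 (N : ℕ) (hN : 2 ≤ N) (z : Fin N → ℝ) (hz : ∀ i, 0 ≤ z i)
    (hsum : ∑ i, z i < N) (ε : ℝ)
    (A : Matrix (Fin N) (Fin N) ℝ)
    (hA : ∀ i j, A i j =
      if (j : ℕ) = N - 1 then z i / N + ε else z i / N - ε / ((N : ℝ) - 1))
    (hinv : IsUnit (1 - A).det)
    (zN ztilde : ℝ) (hzN : zN = z ⟨N - 1, by omega⟩)
    (hzt : ztilde = (∑ i, z i) - zN) :
    ∀ ℓ : Fin N,
      ((1 - A)⁻¹).mulVec (fun _ => (1 : ℝ)) ℓ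
        = -(((N : ℝ) - 1) * ((N : ℝ) * z ℓ + N - ztilde - zN)) /
            (((N : ℝ) - 1) * (-(N : ℝ) + ztilde + zN)
              - (N : ℝ) * ε * (-(N : ℝ) * zN + ztilde + zN)) := by
  have hNR : (2:ℝ) ≤ (N:ℝ) := by exact_mod_cast hN
  have hN0 : (N:ℝ) ≠ 0 := by linarith
  have hN1 : (N:ℝ) - 1 ≠ 0 := by linarith
  set last : Fin N := ⟨N - 1, by omega⟩ with hlast
  have hcond : ∀ j : Fin N, ((j : ℕ) = N - 1) ↔ j = last := by
    intro j
    constructor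
    · intro h; exact Fin.ext h
    · intro h; rw [h]
  have hzlast : z last = zN := hzN.symm
  -- generic sum with ite condition, f-value on last, 0 elsewhere
  have hite0 : ∀ f : Fin N → ℝ,
      (∑ j : Fin N, (if (j : ℕ) = N - 1 then f j else 0)) = f last := by
    intro f
    simp_rw [hcond]
    exact Finset.sum_ite_eq' _ _ _ |>.trans (by simp)
  set D : ℝ := ((N : ℝ) - 1) * (-(N : ℝ) + ztilde + zN)
      - (N : ℝ) * ε * (-(N : ℝ) * zN + ztilde + zN) with hDdef
  -- first: D ≠ 0
  have hD : D ≠ 0 := by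
    intro hD0
    -- left kernel vector
    set y : Fin N → ℝ := fun j =>
      1 / (N : ℝ) + (if (j : ℕ) = N - 1 then ε else -ε / ((N : ℝ) - 1)) with hy
    have hTy : (∑ i, y i) = 1 := by
      rw [hy]
      rw [Finset.sum_add_distrib, Finset.sum_const, Finset.card_univ, Fintype.card_fin]
      have : (∑ i : Fin N, (if (i : ℕ) = N - 1 then ε else -ε / ((N : ℝ) - 1)))
          = ∑ i : Fin N, ((-ε / ((N:ℝ)-1)) + (if (i : ℕ) = N - 1 then ε + ε / ((N:ℝ)-1) else 0)) := by
        apply Finset.sum_congr rfl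
        intro i _
        split_ifs <;> ring
      rw [this, Finset.sum_add_distrib, Finset.sum_const, Finset.card_univ, Fintype.card_fin,
        hite0 (fun _ => ε + ε / ((N:ℝ)-1))]
      simp only [nsmul_eq_mul]
      field_simp
      ring
    have hQy : (∑ i, y i * z i) = 1 := by
      have expand : (∑ i, y i * z i)
          = ∑ i, ((1/(N:ℝ) - ε/((N:ℝ)-1)) * z i
              + (if (i : ℕ) = N - 1 then (ε + ε/((N:ℝ)-1)) * z i else 0)) := by
        apply Finset.sum_congr rfl
        intro i _
        simp only [hy]
        split_ifs <;> ring
      rw [expand, Finset.sum_add_distrib, ← Finset.mul_sum,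
        hite0 (fun i => (ε + ε/((N:ℝ)-1)) * z i), hzlast]
      have hsz : (∑ i, z i) = ztilde + zN := by rw [hzt]; ring
      rw [hsz]
      have := hD0
      rw [hDdef] at this
      field_simp
      nlinarith [this]
    have hker : Matrix.vecMul y (1 - A) = 0 := by
      funext j
      have : Matrix.vecMul y (1 - A) j = ∑ i, y i * ((1 - A) i j) := by
        simp [Matrix.vecMul, dotProduct]
      rw [this]
      have expand : ∀ i, y i * ((1 - A) i j)
          = (if i = j then y i else 0)
            - (y i * z i / N + (if (j : ℕ) = N - 1 then ε else -ε/((N:ℝ)-1)) * y i) := by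
        intro i
        rw [Matrix.sub_apply, Matrix.one_apply, hA]
        by_cases h : i = j <;> by_cases h2 : (j:ℕ) = N - 1 <;> simp [h, h2] <;> ring
      rw [Finset.sum_congr rfl (fun i _ => expand i)]
      rw [Finset.sum_sub_distrib, Finset.sum_ite_eq' Finset.univ j y, Finset.sum_add_distrib,
        ← Finset.mul_sum, hTy]
      have : (∑ i, y i * z i / (N:ℝ)) = (∑ i, y i * z i) / N := by
        rw [Finset.sum_div]
      rw [this, hQy]
      simp only [Finset.mem_univ, if_true]
      simp only [hy, Pi.zero_apply]
      split_ifs <;> ring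
    have hy0 : y = 0 := by
      have h1 : Matrix.vecMul (Matrix.vecMul y (1 - A)) (1 - A)⁻¹
          = Matrix.vecMul y ((1 - A) * (1 - A)⁻¹) := by
        rw [Matrix.vecMul_vecMul]
      rw [hker, Matrix.zero_vecMul, Matrix.mul_nonsing_inv _ hinv, Matrix.vecMul_one] at h1
      exact h1.symm
    rw [hy0] at hTy
    simp at hTy
  -- the candidate solution vector
  set v : Fin N → ℝ := fun ℓ =>
    -(((N : ℝ) - 1) * ((N : ℝ) * z ℓ + N - ztilde - zN)) / D with hv
  have hvlast : v last = -(((N : ℝ) - 1) * ((N : ℝ) * zN + N - ztilde - zN)) / D := by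
    simp only [hv]; rw [hzlast]
  have hS : (∑ j, v j) = -(((N : ℝ) - 1) * (N:ℝ)^2) / D := by
    have expand : (∑ j, v j)
        = ∑ j, ((-((N:ℝ)-1) * (N:ℝ) / D) * z j
            + (-((N:ℝ)-1) * ((N:ℝ) - ztilde - zN) / D)) := by
      apply Finset.sum_congr rfl
      intro j _
      rw [hv]; ring
    rw [expand, Finset.sum_add_distrib, ← Finset.mul_sum, Finset.sum_const,
      Finset.card_univ, Fintype.card_fin]
    have hsz : (∑ i, z i) = ztilde + zN := by rw [hzt]; ring
    rw [hsz]
    push_cast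
    ring
  have key : (1 - A).mulVec v = fun _ => (1 : ℝ) := by
    funext i
    have : (1 - A).mulVec v i = ∑ j, ((1 - A) i j) * v j := by
      simp [Matrix.mulVec, dotProduct]
    rw [this]
    have expand : ∀ j, ((1 - A) i j) * v j
        = (if j = i then v j else 0)
          - ((z i / N - ε/((N:ℝ)-1)) * v j
              + (if (j : ℕ) = N - 1 then (ε + ε/((N:ℝ)-1)) * v j else 0)) := by
      intro j
      rw [Matrix.sub_apply, Matrix.one_apply, hA]
      by_cases h : i = j <;> by_cases h2 : (j:ℕ) = N - 1 <;>
        simp [h, eq_comm (a := j) (b := i), h2] <;> ring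
    rw [Finset.sum_congr rfl (fun j _ => expand j)]
    rw [Finset.sum_sub_distrib, Finset.sum_ite_eq' Finset.univ i v, Finset.sum_add_distrib,
      ← Finset.mul_sum, hS, hite0 (fun j => (ε + ε/((N:ℝ)-1)) * v j), hvlast]
    simp only [Finset.mem_univ, if_true]
    simp only [hv]
    field_simp
    ring
  intro ℓ
  have step : ((1 - A)⁻¹).mulVec (fun _ => (1 : ℝ)) = v := by
    rw [← key, Matrix.mulVec_mulVec, Matrix.nonsing_inv_mul _ hinv, Matrix.one_mulVec]
  rw [step, hv]
end

section
/- Let A be the constant-column matrix a_{ij} = z_i/N with z_i ≥ 0 and z̄ < 1. Then the average of the upstreamness coefficients equals the common downstreamness coefficient: (1/N) ∑_ℓ [(I−A)⁻¹ 1]_ℓ = 1 + z̄/(1−z̄) = [(I−Aᵀ)⁻¹ 1]_k for every k. -/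
open Matrix Finset

theorem stmt_13 (N : ℕ) (hN : 1 ≤ N) (z : Fin N → ℝ) (hz : ∀ i, 0 ≤ z i)
    (zbar : ℝ) (hzbar : zbar = (1 / (N : ℝ)) * ∑ i, z i) (hzbar1 : zbar < 1)
    (A : Matrix (Fin N) (Fin N) ℝ) (hA : ∀ i j, A i j = z i / (N : ℝ)) :
    (1 / (N : ℝ)) * ∑ ℓ, ((1 - A)⁻¹).mulVec (fun _ => (1 : ℝ)) ℓ
        = 1 + zbar / (1 - zbar) ∧
    ∀ k : Fin N,
      ((1 - Aᵀ)⁻¹).mulVec (fun _ => (1 : ℝ)) k = 1 + zbar / (1 - zbar) := by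
  have hN0 : (0 : ℝ) < (N : ℝ) := by exact_mod_cast hN
  have hz1 : (1 : ℝ) - zbar ≠ 0 := by linarith
  set c : ℝ := (1 - zbar)⁻¹ with hc
  have hcz : c * (1 - zbar) = 1 := inv_mul_cancel₀ hz1
  have hsum : ∑ i, z i = (N : ℝ) * zbar := by
    rw [hzbar]; field_simp
  have hAA : A * A = zbar • A := by
    ext i j
    simp only [Matrix.mul_apply, Matrix.smul_apply, smul_eq_mul, hA]
    rw [← Finset.mul_sum, ← Finset.sum_div, hsum]
    field_simp
  have key : ∀ B : Matrix (Fin N) (Fin N) ℝ,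
      (1 + c • B - B - (c * zbar) • B : Matrix (Fin N) (Fin N) ℝ) = 1 := by
    intro B
    have h3 : (1 + c • B - B - (c * zbar) • B : Matrix (Fin N) (Fin N) ℝ)
        = 1 + (c - 1 - c * zbar) • B := by
      rw [sub_smul, sub_smul, one_smul]; abel
    have h4 : c - 1 - c * zbar = 0 := by rw [← hcz]; ring
    rw [h3, h4, zero_smul, add_zero]
  have hright : (1 - A) * (1 + c • A) = 1 := by
    have expand : (1 - A) * (1 + c • A) = 1 + c • A - A - c • (A * A) := by
      rw [sub_mul, mul_add, mul_add, one_mul, one_mul, mul_one, mul_smul_comm]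
      abel
    rw [expand, hAA, smul_smul, key]
  have hleft : (1 + c • A) * (1 - A) = 1 := by
    have expand : (1 + c • A) * (1 - A) = 1 + c • A - A - c • (A * A) := by
      rw [add_mul, mul_sub, mul_sub, one_mul, one_mul, mul_one, smul_mul_assoc]
      abel
    rw [expand, hAA, smul_smul, key]
  have hinv : (1 - A)⁻¹ = 1 + c • A := Matrix.inv_eq_right_inv hright
  have hinvT : (1 - Aᵀ)⁻¹ = 1 + c • Aᵀ := by
    apply Matrix.inv_eq_right_inv
    have h5 : (1 - Aᵀ) * (1 + c • Aᵀ) = ((1 + c • A) * (1 - A))ᵀ := by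
      simp [Matrix.transpose_mul, Matrix.transpose_sub, Matrix.transpose_add,
        Matrix.transpose_smul]
    rw [h5, hleft, Matrix.transpose_one]
  have hrow : ∀ i, ∑ k, A i k = z i := by
    intro i
    simp [hA, Finset.sum_const, mul_comm]
    field_simp
  have hcol : ∀ k, ∑ ℓ, A ℓ k = zbar := by
    intro k
    simp only [hA]
    rw [← Finset.sum_div, hsum]
    field_simp
  have hu : ∀ i, ((1 - A)⁻¹).mulVec (fun _ => (1 : ℝ)) i = 1 + c * z i := by
    intro i
    rw [hinv]
    simp [Matrix.mulVec, dotProduct, Matrix.add_apply, Matrix.one_apply,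
      Finset.mul_sum, Finset.sum_add_distrib]
    rw [← Finset.mul_sum, hrow i]
  have hdiv : zbar / (1 - zbar) = c * zbar := by
    rw [div_eq_mul_inv, mul_comm]
  constructor
  · rw [Finset.sum_congr rfl (fun i _ => hu i)]
    rw [Finset.sum_add_distrib, Finset.sum_const, ← Finset.mul_sum, hsum, hdiv]
    simp only [Finset.card_univ, Fintype.card_fin, nsmul_eq_mul]
    field_simp
  · intro k
    rw [hinvT, hdiv]
    simp [Matrix.mulVec, dotProduct, Matrix.add_apply, Matrix.one_apply,
      Finset.sum_add_distrib]
    rw [← Finset.mul_sum, hcol k]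
end

section
/- Let A be an N×N real matrix (N ≥ 2) with nonnegative entries and row sums z_i with max_i z_i =: z < 1, and let be the matrix with â_{ij} = z_i/N. Then |1ᵀ(I − Âᵀ)⁻¹(Âᵀ − Aᵀ)(I − Âᵀ)⁻¹ 1| / N ≤ (N−1) z̄ / (1 − z̄)², where z̄ = (1/N)∑ z_i. -/
open Matrix Finset

theorem stmt_18 (N : ℕ) (hN : 2 ≤ N) (A : Matrix (Fin N) (Fin N) ℝ)
    (hpos : ∀ i j, 0 ≤ A i j) (z : Fin N → ℝ)
    (hrow : ∀ i, ∑ j, A i j = z i)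
    (zmax : ℝ) (hzmax : ∀ i, z i ≤ zmax) (hzmax1 : zmax < 1)
    (Ahat : Matrix (Fin N) (Fin N) ℝ) (hAhat : ∀ i j, Ahat i j = z i / (N : ℝ))
    (zbar : ℝ) (hzbar : zbar = (1 / (N : ℝ)) * ∑ i, z i) :
    |(fun _ => (1 : ℝ)) ⬝ᵥ
        ((1 - Ahatᵀ)⁻¹ * (Ahatᵀ - Aᵀ) * (1 - Ahatᵀ)⁻¹).mulVec (fun _ => (1 : ℝ))|
        / (N : ℝ)
      ≤ ((N : ℝ) - 1) * zbar / (1 - zbar) ^ 2 := by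
  have hNpos : (0:ℝ) < N := by positivity
  have hNR : (2:ℝ) ≤ (N:ℝ) := by exact_mod_cast hN
  have hz0 : ∀ i, 0 ≤ z i := fun i => (hrow i) ▸ Finset.sum_nonneg fun j _ => hpos i j
  have hzsum : ∑ i, z i = (N:ℝ) * zbar := by
    rw [hzbar]; field_simp
  have hzbar0 : 0 ≤ zbar := by
    rw [hzbar]
    exact mul_nonneg (by positivity) (Finset.sum_nonneg fun i _ => hz0 i)
  have hzbar1 : zbar < 1 := by
    have h1 : ∑ i, z i ≤ (N:ℝ) * zmax := by
      calc ∑ i, z i ≤ ∑ _i : Fin N, zmax := Finset.sum_le_sum fun i _ => hzmax i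
        _ = (N:ℝ) * zmax := by simp [mul_comm]
    have h2 : (N:ℝ) * zbar ≤ (N:ℝ) * zmax := by rw [← hzsum]; exact h1
    nlinarith
  have h1z : 0 < 1 - zbar := by linarith
  set B : Matrix (Fin N) (Fin N) ℝ :=
    fun i j => (if i = j then (1:ℝ) else 0) + z j / ((N:ℝ) * (1 - zbar)) with hBdef
  have hinv : (1 - Ahatᵀ)⁻¹ = B := by
    apply Matrix.inv_eq_right_inv
    ext i k
    rw [Matrix.mul_apply]
    simp only [Matrix.mul_apply, Matrix.sub_apply, Matrix.transpose_apply, hAhat,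
      Matrix.one_apply, hBdef, sub_mul]
    rw [Finset.sum_sub_distrib]
    have e1 : ∑ j, (if i = j then (1:ℝ) else 0) *
        ((if j = k then (1:ℝ) else 0) + z k / ((N:ℝ) * (1 - zbar))) =
        (if i = k then (1:ℝ) else 0) + z k / ((N:ℝ) * (1 - zbar)) := by
      simp [ite_mul, Finset.sum_ite_eq]
    have e2 : ∑ j, (z j / (N:ℝ)) *
        ((if j = k then (1:ℝ) else 0) + z k / ((N:ℝ) * (1 - zbar))) =
        z k / (N:ℝ) + zbar * z k / ((N:ℝ) * (1 - zbar)) := by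
      simp only [mul_add]
      rw [Finset.sum_add_distrib]
      congr 1
      · simp [mul_ite, Finset.sum_ite_eq']
      · rw [← Finset.sum_mul, ← Finset.sum_div, hzsum]
        field_simp
    rw [e1, e2]
    have hN0 : (N:ℝ) ≠ 0 := ne_of_gt hNpos
    have h1z0 : (1 - zbar) ≠ 0 := ne_of_gt h1z
    split <;> field_simp <;> ring
  set c : Fin N → ℝ := fun j => ∑ l, A l j with hcdef
  have hcsum : ∑ j, c j = (N:ℝ) * zbar := by
    simp only [hcdef]
    rw [Finset.sum_comm]
    simp only [hrow]
    exact hzsum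
  have hc0 : ∀ j, 0 ≤ c j := fun j => Finset.sum_nonneg fun l _ => hpos l j
  have hcU : ∀ j, c j ≤ (N:ℝ) * zbar := by
    intro j
    rw [← hzsum]
    apply Finset.sum_le_sum
    intro l _
    calc A l j ≤ ∑ j', A l j' :=
          Finset.single_le_sum (fun j' _ => hpos l j') (Finset.mem_univ j)
      _ = z l := hrow l
  have hBv : B.mulVec (fun _ => (1:ℝ)) = fun _ => 1/(1-zbar) := by
    funext i
    simp only [Matrix.mulVec, dotProduct, hBdef, mul_one]
    rw [Finset.sum_add_distrib, ← Finset.sum_div, hzsum]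
    simp only [Finset.sum_ite_eq, Finset.mem_univ, if_true]
    field_simp
    ring
  have hvB : Matrix.vecMul (fun _ => (1:ℝ)) B = fun j => 1 + z j/(1-zbar) := by
    funext j
    simp only [Matrix.vecMul, dotProduct, hBdef, one_mul]
    rw [Finset.sum_add_distrib, Finset.sum_const, Finset.card_univ, Fintype.card_fin,
      nsmul_eq_mul]
    simp only [Finset.sum_ite_eq', Finset.mem_univ, if_true]
    field_simp
  have hMw : (Ahatᵀ - Aᵀ).mulVec (fun _ => 1/(1-zbar)) =
      fun k => (zbar - c k) * (1/(1-zbar)) := by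
    funext k
    simp only [Matrix.mulVec, dotProduct, Matrix.sub_apply, Matrix.transpose_apply, hAhat]
    rw [← Finset.sum_mul]
    congr 1
    rw [Finset.sum_sub_distrib, ← Finset.sum_div, hzsum, hcdef]
    field_simp
  have hsum0 : ∑ j, (zbar - c j) = 0 := by
    rw [Finset.sum_sub_distrib, hcsum, Finset.sum_const, Finset.card_univ, Fintype.card_fin,
      nsmul_eq_mul]
    ring
  have key : (fun _ => (1 : ℝ)) ⬝ᵥ
      ((1 - Ahatᵀ)⁻¹ * (Ahatᵀ - Aᵀ) * (1 - Ahatᵀ)⁻¹).mulVec (fun _ => (1 : ℝ)) =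
      (∑ j, z j * (zbar - c j)) * (1/(1-zbar)^2) := by
    rw [hinv, ← Matrix.mulVec_mulVec, ← Matrix.mulVec_mulVec, hBv, hMw,
      Matrix.dotProduct_mulVec, hvB]
    calc ∑ j, (1 + z j/(1-zbar)) * ((zbar - c j) * (1/(1-zbar)))
        = ∑ j, ((zbar - c j) * (1/(1-zbar)) + (z j * (zbar - c j)) * (1/(1-zbar)^2)) := by
          apply Finset.sum_congr rfl
          intro j _
          field_simp
      _ = (∑ j, (zbar - c j)) * (1/(1-zbar)) +
          (∑ j, z j * (zbar - c j)) * (1/(1-zbar)^2) := by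
          rw [Finset.sum_add_distrib, ← Finset.sum_mul, ← Finset.sum_mul]
      _ = (∑ j, z j * (zbar - c j)) * (1/(1-zbar)^2) := by rw [hsum0]; ring
  have hT : |∑ j, z j * (zbar - c j)| ≤ (N:ℝ) * (((N:ℝ)-1) * zbar) := by
    calc |∑ j, z j * (zbar - c j)| ≤ ∑ j, |z j * (zbar - c j)| :=
          Finset.abs_sum_le_sum_abs _ _
      _ ≤ ∑ _j : Fin N, ((N:ℝ)-1) * zbar := by
          apply Finset.sum_le_sum
          intro j _
          rw [abs_mul, abs_of_nonneg (hz0 j)]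
          have h1 : |zbar - c j| ≤ ((N:ℝ)-1) * zbar :=
            abs_le.mpr ⟨by nlinarith [hcU j], by nlinarith [hc0 j]⟩
          have hz1 : z j ≤ 1 := le_of_lt (lt_of_le_of_lt (hzmax j) hzmax1)
          calc z j * |zbar - c j| ≤ 1 * (((N:ℝ)-1) * zbar) :=
                mul_le_mul hz1 h1 (abs_nonneg _) one_pos.le
            _ = ((N:ℝ)-1) * zbar := one_mul _
      _ = (N:ℝ) * (((N:ℝ)-1) * zbar) := by
          rw [Finset.sum_const, Finset.card_univ, Fintype.card_fin, nsmul_eq_mul]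
  rw [key, abs_mul, abs_of_nonneg (by positivity : (0:ℝ) ≤ 1/(1-zbar)^2)]
  calc |∑ j, z j * (zbar - c j)| * (1/(1-zbar)^2) / (N:ℝ)
      ≤ (N:ℝ) * (((N:ℝ)-1) * zbar) * (1/(1-zbar)^2) / (N:ℝ) := by
        exact div_le_div_of_nonneg_right
          (mul_le_mul_of_nonneg_right hT (by positivity)) hNpos.le
    _ = ((N:ℝ)-1) * zbar / (1-zbar)^2 := by
        field_simp
end
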